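/- Let s be the k-th avalanche (the leftmost strategy from π(k−1)^{↓0} to π(k)) in KSPM(D), and let r_t = max{s_{t'} : t' ≤ t}. If s_{t+1} < r_t, then s_{t+1} is the largest column i < r_t not appearing in s_{[1,t]}, and r_t − s_{t+1} < D − 1. -/

import Mathlib

/-- Effect of firing column `i` in KSPM(D), on height-difference configurations. -/
def step (D : ℕ) (σ : ℕ → ℕ) (i : ℕ) : ℕ → ℕ :=
  fun j =>
    if j = i then σ i - D
    else if j + 1 = i then σ j + (D - 1)
    else if j = i + D - 1 then σ j + 1
    else σ j

/-- Transition on column `i`: `σ →ᵢ σ'`. -/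
def KTrans (D : ℕ) (σ : ℕ → ℕ) (i : ℕ) (σ' : ℕ → ℕ) : Prop :=
  D ≤ σ i ∧ σ' = step D σ i

/-- A strategy (list of fired columns) is legal from `σ`. -/
def Legal (D : ℕ) : (ℕ → ℕ) → List ℕ → Prop
  | _, [] => True
  | σ, i :: s => D ≤ σ i ∧ Legal D (step D σ i) s

/-- Configuration obtained by applying a strategy. -/
def applyStrat (D : ℕ) : (ℕ → ℕ) → List ℕ → (ℕ → ℕ)
  | σ, [] => σ
  | σ, i :: s => applyStrat D (step D σ i) s

/-- Reachability `σ →* σ'`. -/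
def Reaches (D : ℕ) (σ σ' : ℕ → ℕ) : Prop :=
  ∃ s : List ℕ, Legal D σ s ∧ applyStrat D σ s = σ'

/-- A configuration is stable (a fixed point) if no transition is possible. -/
def Stable (D : ℕ) (σ : ℕ → ℕ) : Prop := ∀ i, σ i < D

/-- Initial configuration: `N` grains stacked on column 0 (height differences `(N,0,0,…)`). -/
def initConf (N : ℕ) : ℕ → ℕ := fun j => if j = 0 then N else 0

/-- `τ = π(N)`: the stable configuration reachable from `N` stacked grains. -/
def IsPi (D N : ℕ) (τ : ℕ → ℕ) : Prop := Reaches D (initConf N) τ ∧ Stable D τ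

/-- `σ^{↓0}`: add one grain on column 0. -/
def addGrain (σ : ℕ → ℕ) : ℕ → ℕ := Function.update σ 0 (σ 0 + 1)

/-- `s` is the leftmost (lexicographically minimal) strategy from `τ^{↓0}` to `τ'`. -/
def IsAvalancheFor (D : ℕ) (τ τ' : ℕ → ℕ) (s : List ℕ) : Prop :=
  Legal D (addGrain τ) s ∧ applyStrat D (addGrain τ) s = τ' ∧
    ∀ s' : List ℕ, Legal D (addGrain τ) s' → applyStrat D (addGrain τ) s' = τ' →
      ¬ List.Lex (· < ·) s' s

/-- `s` is the `k`-th avalanche: leftmost strategy from `π(k-1)^{↓0}` to `π(k)`. -/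
def IsAvalanche (D k : ℕ) (s : List ℕ) : Prop :=
  ∃ τ τ' : ℕ → ℕ, IsPi D (k - 1) τ ∧ IsPi D k τ' ∧ IsAvalancheFor D τ τ' s

/-- Position `t` (0-indexed) of strategy `s` is a peak: it exceeds all earlier fired columns. -/
def IsPeak (s : List ℕ) (t : ℕ) : Prop :=
  t < s.length ∧ ∀ t' < t, s.getD t' 0 < s.getD t 0

/-- Column `p` is a peak of `s`. -/
def IsPeakVal (s : List ℕ) (p : ℕ) : Prop :=
  ∃ t : ℕ, IsPeak s t ∧ s.getD t 0 = p

namespace AvalancheAux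


variable {D : ℕ}

@[simp] lemma legal_nil (σ : ℕ → ℕ) : Legal D σ [] := trivial

@[simp] lemma legal_cons (σ : ℕ → ℕ) (i : ℕ) (s : List ℕ) :
    Legal D σ (i :: s) ↔ D ≤ σ i ∧ Legal D (step D σ i) s := Iff.rfl

@[simp] lemma applyStrat_nil (σ : ℕ → ℕ) : applyStrat D σ [] = σ := rfl

@[simp] lemma applyStrat_cons (σ : ℕ → ℕ) (i : ℕ) (s : List ℕ) :
    applyStrat D σ (i :: s) = applyStrat D (step D σ i) s := rfl

lemma legal_append (σ : ℕ → ℕ) (u v : List ℕ) :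
    Legal D σ (u ++ v) ↔ Legal D σ u ∧ Legal D (applyStrat D σ u) v := by
  induction u generalizing σ with
  | nil => simp
  | cons x u ih => simp [ih, and_assoc]

lemma applyStrat_append (σ : ℕ → ℕ) (u v : List ℕ) :
    applyStrat D σ (u ++ v) = applyStrat D (applyStrat D σ u) v := by
  induction u generalizing σ with
  | nil => simp
  | cons x u ih => simp [ih]

set_option maxHeartbeats 1000000 in
/-- The value formula over ℤ. -/
lemma value_formula (hD : 2 ≤ D) (σ : ℕ → ℕ) (s : List ℕ) (h : Legal D σ s) (j : ℕ) :
    (applyStrat D σ s j : ℤ) = (σ j : ℤ) + ((D : ℤ) - 1) * s.count (j + 1)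
      + (if D - 1 ≤ j then (s.count (j - (D - 1)) : ℤ) else 0) - (D : ℤ) * s.count j := by
  induction s generalizing σ with
  | nil => simp
  | cons i s ih =>
    obtain ⟨hfire, hleg⟩ := h
    rw [applyStrat_cons, ih _ hleg]
    have hstep : ((step D σ i j : ℕ) : ℤ)
        = (σ j : ℤ) + (if j = i then -(D:ℤ) else 0)
          + (if j + 1 = i then (D:ℤ) - 1 else 0)
          + (if j = i + D - 1 then 1 else 0) := by
      unfold step
      split_ifs <;> (try subst_vars) <;> omega
    rw [hstep]
    simp only [List.count_cons, beq_iff_eq]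
    split_ifs <;> push_cast
    all_goals first | (exfalso; omega) | ring | omega

lemma step_le (σ : ℕ → ℕ) (i j : ℕ) (hji : j ≠ i) : σ j ≤ step D σ i j := by
  unfold step; split_ifs <;> omega

lemma le_applyStrat_of_not_mem (σ : ℕ → ℕ) (s : List ℕ) (i : ℕ) (hi : i ∉ s) :
    σ i ≤ applyStrat D σ s i := by
  induction s generalizing σ with
  | nil => simp
  | cons x s ih =>
    simp only [List.mem_cons, not_or] at hi
    exact le_trans (step_le σ x i hi.1) (ih (step D σ x) hi.2)

lemma step_comm (hD : 2 ≤ D) (σ : ℕ → ℕ) (i x : ℕ) (hix : i ≠ x)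
    (hi : D ≤ σ i) (hx : D ≤ σ x) :
    step D (step D σ i) x = step D (step D σ x) i := by
  funext j
  unfold step
  split_ifs <;> (try subst_vars) <;> omega

lemma legal_step_of_not_mem (hD : 2 ≤ D) (i : ℕ) :
    ∀ (a : List ℕ) (σ : ℕ → ℕ), D ≤ σ i → i ∉ a → Legal D σ a →
      Legal D (step D σ i) a ∧ applyStrat D (step D σ i) a = step D (applyStrat D σ a) i := by
  intro a
  induction a with
  | nil => intro σ h _ _; exact ⟨trivial, rfl⟩
  | cons x a ih =>
    intro σ hi hmem hleg
    simp only [List.mem_cons, not_or] at hmem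
    obtain ⟨hx, hlega⟩ := hleg
    have hix : i ≠ x := hmem.1
    have h1 : D ≤ step D σ i x := le_trans hx (step_le σ i x (Ne.symm hix))
    have h2 : D ≤ step D σ x i := le_trans hi (step_le σ x i hix)
    have hcomm := step_comm hD σ i x hix hi hx
    obtain ⟨hl, ha⟩ := ih (step D σ x) h2 hmem.2 hlega
    refine ⟨⟨h1, ?_⟩, ?_⟩
    · rw [hcomm]; exact hl
    · show applyStrat D (step D (step D σ i) x) a = _
      rw [hcomm, ha]; rfl

lemma first_split {i : ℕ} {s : List ℕ} (h : i ∈ s) :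
    ∃ a b, s = a ++ i :: b ∧ i ∉ a := by
  induction s with
  | nil => cases h
  | cons x s ih =>
    by_cases hxi : x = i
    · exact ⟨[], s, by simp [hxi], by simp⟩
    · have hmem : i ∈ s := by
        rcases List.mem_cons.1 h with h' | h'
        · exact absurd h'.symm hxi
        · exact h'
      rcases ih hmem with ⟨a, b, hab, hia⟩
      refine ⟨x :: a, b, by simp [hab], ?_⟩
      simp only [List.mem_cons, not_or]
      exact ⟨fun h' => hxi h'.symm, hia⟩

lemma mem_of_fireable (σ : ℕ → ℕ) (s : List ℕ) (hleg : Legal D σ s)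
    (hstab : Stable D (applyStrat D σ s)) (i : ℕ) (hi : D ≤ σ i) : i ∈ s := by
  by_contra hmem
  have h1 := le_applyStrat_of_not_mem (D := D) σ s i hmem
  have h2 := hstab i
  omega

lemma exchange (hD : 2 ≤ D) (σ : ℕ → ℕ) (s : List ℕ) (hleg : Legal D σ s)
    (hstab : Stable D (applyStrat D σ s)) (i : ℕ) (hi : D ≤ σ i) :
    ∃ s', Legal D (step D σ i) s' ∧
      applyStrat D (step D σ i) s' = applyStrat D σ s := by
  obtain ⟨a, b, hab, hia⟩ := first_split (mem_of_fireable σ s hleg hstab i hi)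
  subst hab
  rw [legal_append] at hleg
  obtain ⟨hlega, hfa, hb⟩ := hleg
  obtain ⟨hl, ha⟩ := legal_step_of_not_mem hD i a σ hi hia hlega
  refine ⟨a ++ b, ?_, ?_⟩
  · rw [legal_append]
    exact ⟨hl, by rw [ha]; exact hb⟩
  · rw [applyStrat_append, applyStrat_append, ha]
    rfl

lemma completion (hD : 2 ≤ D) :
    ∀ (u : List ℕ) (σ : ℕ → ℕ) (s : List ℕ), Legal D σ s → Stable D (applyStrat D σ s) →
      Legal D σ u → ∃ w, Legal D σ (u ++ w) ∧ applyStrat D σ (u ++ w) = applyStrat D σ s := by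
  intro u
  induction u with
  | nil => intro σ s h1 h2 _; exact ⟨s, h1, rfl⟩
  | cons i u ih =>
    intro σ s h1 h2 hu
    obtain ⟨hi, hu'⟩ := hu
    obtain ⟨s', hs'leg, hs'app⟩ := exchange hD σ s h1 h2 i hi
    obtain ⟨w, hw1, hw2⟩ := ih (step D σ i) s' hs'leg (by rw [hs'app]; exact h2) hu'
    exact ⟨w, ⟨hi, hw1⟩, by rw [show (i :: u) ++ w = i :: (u ++ w) from rfl]; simpa [hs'app] using hw2⟩

lemma lex_append (p : List ℕ) (i j : ℕ) (u v : List ℕ) (h : i < j) :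
    List.Lex (· < ·) (p ++ i :: u) (p ++ j :: v) := by
  induction p with
  | nil => exact List.Lex.rel h
  | cons x p ih => exact List.Lex.cons ih

lemma take_succ_getD (s : List ℕ) (t : ℕ) (h : t < s.length) :
    s.take (t + 1) = s.take t ++ [s.getD t 0] := by
  rw [List.take_succ]
  congr 1
  simp [List.getD_eq_getElem?_getD, List.getElem?_eq_getElem h]

lemma drop_eq_getD_cons (s : List ℕ) (t : ℕ) (h : t < s.length) :
    s.drop t = s.getD t 0 :: s.drop (t + 1) := by
  rw [List.drop_eq_getElem_cons h]
  simp [List.getD_eq_getElem?_getD, List.getElem?_eq_getElem h]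

lemma legal_take (σ : ℕ → ℕ) (s : List ℕ) (h : Legal D σ s) (t : ℕ) :
    Legal D σ (s.take t) := by
  conv at h => rw [← List.take_append_drop t s]
  exact ((legal_append σ _ _).1 h).1

lemma fireable_at (σ : ℕ → ℕ) (s : List ℕ) (h : Legal D σ s) (t : ℕ) (ht : t < s.length) :
    D ≤ applyStrat D σ (s.take t) (s.getD t 0) := by
  conv at h => rw [← List.take_append_drop t s]
  rw [legal_append] at h
  have h2 := h.2
  rw [drop_eq_getD_cons s t ht] at h2
  exact h2.1

lemma le_foldr_max (l : List ℕ) (x : ℕ) (hx : x ∈ l) : x ≤ l.foldr max 0 := by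
  induction l with
  | nil => cases hx
  | cons a l ih =>
    rcases List.mem_cons.1 hx with h | h
    · subst h; simp only [List.foldr]; omega
    · have := ih h; simp only [List.foldr]; omega

lemma foldr_max_mem (l : List ℕ) (h0 : (0:ℕ) ∈ l) : l.foldr max 0 ∈ l := by
  have aux : ∀ m : List ℕ, m.foldr max 0 ∈ m ∨ m.foldr max 0 = 0 := by
    intro m
    induction m with
    | nil => right; rfl
    | cons a m ih =>
      rcases ih with h | h
      · rcases le_or_gt (m.foldr max 0) a with hle | hlt
        · left; simp [List.foldr]; omega
        · left
          have : max a (m.foldr max 0) = m.foldr max 0 := by omega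
          simp only [List.foldr, this]
          exact List.mem_cons_of_mem _ h
      · left; simp [List.foldr, h]
  rcases aux l with h | h
  · exact h
  · rw [h]; exact h0

lemma addGrain_zero (τ : ℕ → ℕ) : addGrain τ 0 = τ 0 + 1 := by simp [addGrain]

lemma addGrain_ne (τ : ℕ → ℕ) {j : ℕ} (hj : j ≠ 0) : addGrain τ j = τ j := by
  simp [addGrain, Function.update_of_ne hj]

lemma foldr_max_init (l : List ℕ) (a : ℕ) : l.foldr max a = max (l.foldr max 0) a := by
  induction l with
  | nil => simp
  | cons x l ih => simp [List.foldr, ih]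

lemma head_zero {D : ℕ} {τ : ℕ → ℕ} (hτ : Stable D τ) {x : ℕ} {tl : List ℕ}
    (hleg : Legal D (addGrain τ) (x :: tl)) : x = 0 := by
  have h1 := hleg.1
  by_contra hx
  have h2 : addGrain τ x = τ x := addGrain_ne τ hx
  have h3 := hτ x
  omega

lemma zero_mem {D : ℕ} {τ : ℕ → ℕ} (hτ : Stable D τ) {s : List ℕ}
    (hleg : Legal D (addGrain τ) s) (t : ℕ) (ht0 : 1 ≤ t) (hlen : 1 ≤ s.length) :
    (0 : ℕ) ∈ s.take t := by
  cases s with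
  | nil => simp at hlen
  | cons x tl =>
    have hx := head_zero hτ hleg
    obtain ⟨m, rfl⟩ : ∃ m, t = m + 1 := ⟨t - 1, by omega⟩
    rw [List.take_succ_cons]
    simp [hx]

lemma greedy {D : ℕ} (hD : 2 ≤ D) {τ τ' : ℕ → ℕ} (hτ' : Stable D τ') {s : List ℕ}
    (hleg : Legal D (addGrain τ) s) (happ : applyStrat D (addGrain τ) s = τ')
    (hmin : ∀ s', Legal D (addGrain τ) s' → applyStrat D (addGrain τ) s' = τ' →
      ¬ List.Lex (· < ·) s' s)
    (t : ℕ) (ht : t < s.length) (i : ℕ)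
    (hfire : D ≤ applyStrat D (addGrain τ) (s.take t) i) : s.getD t 0 ≤ i := by
  by_contra hlt
  push_neg at hlt
  set σ0 := addGrain τ with hσ0
  have hstab : Stable D (applyStrat D σ0 s) := by rw [happ]; exact hτ'
  have hlegu : Legal D σ0 (s.take t ++ [i]) := by
    rw [legal_append]
    exact ⟨legal_take σ0 s hleg t, hfire, trivial⟩
  obtain ⟨w, hw1, hw2⟩ := completion hD (s.take t ++ [i]) σ0 s hleg hstab hlegu
  refine hmin (s.take t ++ [i] ++ w) hw1 (hw2.trans happ) ?_
  have hs : s = s.take t ++ s.getD t 0 :: s.drop (t + 1) := by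
    conv_lhs => rw [← List.take_append_drop t s]
    rw [drop_eq_getD_cons s t ht]
  rw [List.append_assoc, List.singleton_append]
  conv_rhs => rw [hs]
  exact lex_append _ i _ w _ hlt

lemma not_mem_take_aux {D : ℕ} (hD : 2 ≤ D) {τ : ℕ → ℕ} (hτ : Stable D τ) {s : List ℕ}
    (hleg : Legal D (addGrain τ) s) (t : ℕ) (ht : t < s.length)
    (hnd : (s.take t).Nodup) : s.getD t 0 ∉ s.take t := by
  intro hmem
  have hfire := fireable_at (addGrain τ) s hleg t ht
  have hv := value_formula hD (addGrain τ) (s.take t) (legal_take (addGrain τ) s hleg t)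
    (s.getD t 0)
  generalize hj : s.getD t 0 = j at hmem hfire hv
  have hn : (s.take t).count j = 1 := List.count_eq_one_of_mem hnd hmem
  have hn1 : (s.take t).count (j + 1) ≤ 1 := List.nodup_iff_count_le_one.1 hnd _
  rw [hn] at hv
  by_cases hjd : D - 1 ≤ j
  · have hj0 : j ≠ 0 := by omega
    have hσ : addGrain τ j = τ j := addGrain_ne τ hj0
    have hτj := hτ j
    have hn2 : (s.take t).count (j - (D - 1)) ≤ 1 := List.nodup_iff_count_le_one.1 hnd _
    rw [if_pos hjd] at hv
    rcases Nat.le_one_iff_eq_zero_or_eq_one.1 hn1 with h1 | h1 <;>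
      rcases Nat.le_one_iff_eq_zero_or_eq_one.1 hn2 with h2 | h2 <;>
      rw [h1, h2] at hv <;>
      simp only [Nat.cast_zero, Nat.cast_one, mul_zero, mul_one] at hv <;> omega
  · have hσb : addGrain τ j ≤ D := by
      by_cases hj0 : j = 0
      · rw [hj0, addGrain_zero]; have := hτ 0; omega
      · rw [addGrain_ne τ hj0]; have := hτ j; omega
    rw [if_neg hjd] at hv
    rcases Nat.le_one_iff_eq_zero_or_eq_one.1 hn1 with h1 | h1 <;>
      rw [h1] at hv <;>
      simp only [Nat.cast_zero, Nat.cast_one, mul_zero, mul_one] at hv <;> omega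

lemma take_nodup {D : ℕ} (hD : 2 ≤ D) {τ : ℕ → ℕ} (hτ : Stable D τ) {s : List ℕ}
    (hleg : Legal D (addGrain τ) s) : ∀ t, t ≤ s.length → (s.take t).Nodup := by
  intro t
  induction t with
  | zero => intro _; simp
  | succ t ih =>
    intro h
    have ht : t < s.length := by omega
    have hnd := ih (by omega)
    have hj := not_mem_take_aux hD hτ hleg t ht hnd
    rw [take_succ_getD s t ht, List.nodup_append]
    refine ⟨hnd, List.nodup_singleton _, ?_⟩
    intro x hx y hy hxy; subst hxy
    exact hj (List.mem_singleton.1 hy ▸ hx)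

lemma record_struct {D : ℕ} (hD : 2 ≤ D) {τ : ℕ → ℕ} (hτ : Stable D τ) {s : List ℕ}
    (hleg : Legal D (addGrain τ) s) (t : ℕ) (ht0 : 1 ≤ t) (ht : t < s.length)
    (hgt : (s.take t).foldr max 0 < s.getD t 0) :
    D - 1 ≤ s.getD t 0 ∧ s.getD t 0 - (D - 1) ∈ s.take t := by
  have hfire := fireable_at (addGrain τ) s hleg t ht
  have hv := value_formula hD (addGrain τ) (s.take t) (legal_take (addGrain τ) s hleg t)
    (s.getD t 0)
  generalize hj : s.getD t 0 = j at hgt hfire hv ⊢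
  set r := (s.take t).foldr max 0 with hrdef
  have hjF : j ∉ s.take t := fun hmem => by
    have := le_foldr_max _ _ hmem; omega
  have hj1F : j + 1 ∉ s.take t := fun hmem => by
    have := le_foldr_max _ _ hmem; omega
  have h0mem : (0 : ℕ) ∈ s.take t := zero_mem hτ hleg t ht0 (by omega)
  have hj0 : j ≠ 0 := fun h => hjF (h ▸ h0mem)
  have hσ : addGrain τ j = τ j := addGrain_ne τ hj0
  have hτj := hτ j
  have hc0 : (s.take t).count j = 0 := List.count_eq_zero.2 hjF
  have hc1 : (s.take t).count (j + 1) = 0 := List.count_eq_zero.2 hj1F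
  rw [hc0, hc1] at hv
  by_cases hjd : D - 1 ≤ j
  · refine ⟨hjd, ?_⟩
    rw [if_pos hjd] at hv
    have hcnt : 1 ≤ (s.take t).count (j - (D - 1)) := by push_cast at hv; omega
    exact List.count_pos_iff.1 hcnt
  · exfalso
    rw [if_neg hjd] at hv
    push_cast at hv
    omega

lemma step_eq_of_ne {D : ℕ} (σ : ℕ → ℕ) (j i : ℕ) (h1 : i ≠ j) (h2 : i + 1 ≠ j)
    (h3 : i ≠ j + D - 1) : step D σ j i = σ i := by
  unfold step
  rw [if_neg h1, if_neg h2, if_neg h3]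

lemma invariant {D : ℕ} (hD : 2 ≤ D) {τ τ' : ℕ → ℕ} (hτ : Stable D τ) (hτ' : Stable D τ')
    {s : List ℕ} (hleg : Legal D (addGrain τ) s) (happ : applyStrat D (addGrain τ) s = τ')
    (hmin : ∀ s', Legal D (addGrain τ) s' → applyStrat D (addGrain τ) s' = τ' →
      ¬ List.Lex (· < ·) s' s) :
    ∀ t, 1 ≤ t → t ≤ s.length →
      (∀ i, i ∉ s.take t → i < (s.take t).foldr max 0 →
          D ≤ applyStrat D (addGrain τ) (s.take t) i →
          (∀ i', i' < (s.take t).foldr max 0 → i' ∉ s.take t → i' ≤ i) ∧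
            (s.take t).foldr max 0 - i < D - 1) ∧
      ((s.take t).foldr max 0 = 0 ∨
        (D - 1 ≤ (s.take t).foldr max 0 ∧ (s.take t).foldr max 0 - (D - 1) ∈ s.take t)) := by
  intro t
  induction t with
  | zero => intro h; omega
  | succ t ih =>
    intro h1 hlen
    by_cases ht1 : t = 0
    · subst ht1
      cases s with
      | nil => simp at hlen
      | cons x tl =>
        have hx : x = 0 := head_zero hτ hleg
        subst hx
        have htake1 : (0 :: tl).take 1 = [0] := rfl
        rw [htake1]
        constructor
        · intro i _ hi _
          simp only [List.foldr, Nat.max_self] at hi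
          omega
        · left; rfl
    · have ht0 : 1 ≤ t := by omega
      have ht : t < s.length := by omega
      obtain ⟨A, B⟩ := ih ht0 (by omega)
      have htake := take_succ_getD s t ht
      have happly : applyStrat D (addGrain τ) (s.take (t + 1))
          = step D (applyStrat D (addGrain τ) (s.take t)) (s.getD t 0) := by
        rw [htake, applyStrat_append]; rfl
      have hfold : (s.take (t + 1)).foldr max 0
          = max ((s.take t).foldr max 0) (s.getD t 0) := by
        rw [htake, List.foldr_append]
        simp only [List.foldr]
        rw [show max (s.getD t 0) 0 = s.getD t 0 by omega, foldr_max_init]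
      have hnd := take_nodup hD hτ hleg t (le_of_lt ht)
      have hjF := not_mem_take_aux hD hτ hleg t ht hnd
      have hfj := fireable_at (addGrain τ) s hleg t ht
      have h0mem : (0 : ℕ) ∈ s.take t := zero_mem hτ hleg t ht0 (by omega)
      have hrF : (s.take t).foldr max 0 ∈ s.take t := foldr_max_mem _ h0mem
      generalize hj : s.getD t 0 = j at htake happly hfold hjF hfj
      generalize hr : (s.take t).foldr max 0 = r at hfold A B hrF
      rcases lt_trichotomy j r with hcase | hcase | hcase
      · -- non-record firing
        have hrmax : max r j = r := by omega
        rw [hrmax] at hfold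
        obtain ⟨hmaxj, hgapj⟩ := A j hjF hcase hfj
        constructor
        · intro i hiF' hir' hfire'
          rw [hfold] at hir' ⊢
          rw [htake] at hiF'
          simp only [List.mem_append, List.mem_singleton, not_or] at hiF'
          obtain ⟨hiF, hij⟩ := hiF'
          rw [happly] at hfire'
          by_cases hi1 : i + 1 = j
          · constructor
            · intro i' hi'r hi'F'
              rw [htake] at hi'F'
              simp only [List.mem_append, List.mem_singleton, not_or] at hi'F'
              have := hmaxj i' hi'r hi'F'.1
              omega
            · rcases B with hB0 | ⟨hBD, hBmem⟩
              · omega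
              · by_cases hcrit : r - j = D - 2
                · exfalso
                  have hieq : i = r - (D - 1) := by omega
                  exact hiF (hieq ▸ hBmem)
                · omega
          · exfalso
            have hi3 : i ≠ j + D - 1 := by omega
            rw [step_eq_of_ne _ _ _ hij hi1 hi3] at hfire'
            obtain ⟨hmaxi, _⟩ := A i hiF hir' hfire'
            have hle1 := hmaxj i hir' hiF
            have hle2 := hmaxi j hcase hjF
            omega
        · rw [hfold]
          rcases B with h | ⟨hb1, hb2⟩
          · left; exact h
          · right
            exact ⟨hb1, by rw [htake]; exact List.mem_append_left _ hb2⟩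
      · exact absurd (hcase ▸ hrF) hjF
      · -- record firing
        have hrmax : max r j = j := by omega
        rw [hrmax] at hfold
        obtain ⟨hrec1, hrec2⟩ := record_struct hD hτ hleg t ht0 ht (by rw [hj, hr]; exact hcase)
        rw [hj] at hrec1 hrec2
        constructor
        · intro i hiF' hir' hfire'
          rw [hfold] at hir' ⊢
          rw [htake] at hiF'
          simp only [List.mem_append, List.mem_singleton, not_or] at hiF'
          obtain ⟨hiF, hij⟩ := hiF'
          rw [happly] at hfire'
          by_cases hi1 : i + 1 = j
          · constructor
            · intro i' hi' _
              omega
            · by_cases hD3 : 3 ≤ D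
              · omega
              · exfalso
                have hieq : i = j - (D - 1) := by omega
                exact hiF (hieq ▸ hrec2)
          · exfalso
            have hi3 : i ≠ j + D - 1 := by omega
            rw [step_eq_of_ne _ _ _ hij hi1 hi3] at hfire'
            have hge := greedy hD hτ' hleg happ hmin t ht i hfire'
            rw [hj] at hge
            omega
        · right
          rw [hfold]
          exact ⟨hrec1, by rw [htake]; exact List.mem_append_left _ hrec2⟩

end AvalancheAux

/-- In an avalanche, a non-progress firing fires the largest not-yet-fired column below
the current maximum r, and lies at distance < D - 1 from it. -/
theorem avalanche_below_max (D k : ℕ) (hD : 2 ≤ D) (hk : 1 ≤ k) (s : List ℕ)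
    (hs : IsAvalanche D k s) (t : ℕ) (ht0 : 0 < t) (ht : t < s.length)
    (r : ℕ) (hr : r = (s.take t).foldr max 0) (hlt : s.getD t 0 < r) :
    (s.getD t 0 ∉ s.take t ∧ ∀ i : ℕ, i < r → i ∉ s.take t → i ≤ s.getD t 0) ∧
      r - s.getD t 0 < D - 1 := by
  obtain ⟨τ, τ', ⟨_, hτ⟩, ⟨_, hτ'⟩, hleg, happ, hmin⟩ := hs
  obtain ⟨A, B⟩ := AvalancheAux.invariant hD hτ hτ' hleg happ hmin t ht0 (le_of_lt ht)
  have hnd := AvalancheAux.take_nodup hD hτ hleg t (le_of_lt ht)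
  have hjF := AvalancheAux.not_mem_take_aux hD hτ hleg t ht hnd
  have hfj := AvalancheAux.fireable_at (addGrain τ) s hleg t ht
  subst hr
  obtain ⟨hmax, hgap⟩ := A (s.getD t 0) hjF hlt hfj
  exact ⟨⟨hjF, hmax⟩, hgap⟩
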